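/- Let A, B be closed discrete subsets of R^d and let F_{A,B} : S(R^d) → S(A) ⊕ S(B) be the map f ↦ (f|_A, f̂|_B), where S(A) denotes rapidly decreasing sequences on A. Suppose A' ⊇ A and B' ⊇ B are closed discrete supersets such that F_{A',B'} has finite-dimensional cokernel, and suppose A'∖A and B'∖B are infinite. Then the kernel of F_{A,B} is infinite-dimensional. -/

import Mathlib

open MeasureTheory

noncomputable def jb {d : ℕ} (x : EuclideanSpace ℝ (Fin d)) : ℝ := Real.sqrt (1 + ‖x‖ ^ 2)

/-- A sequence on `A` is rapidly decreasing if `|α(a)| ⟨a⟩^N` is bounded for every `N`. -/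
def IsRapid {d : ℕ} {A : Set (EuclideanSpace ℝ (Fin d))} (α : A → ℂ) : Prop :=
  ∀ N : ℕ, ∃ C : ℝ, ∀ a : A, ‖α a‖ * jb (a : EuclideanSpace ℝ (Fin d)) ^ N ≤ C

/-- The map `F_{A,B} f = (f|_A, f̂|_B)`. -/
noncomputable def restrMap {d : ℕ} (A B : Set (EuclideanSpace ℝ (Fin d)))
    (f : SchwartzMap (EuclideanSpace ℝ (Fin d)) ℂ) : (A → ℂ) × (B → ℂ) :=
  (fun a => f a, fun b => FourierTransform.fourier (⇑f : EuclideanSpace ℝ (Fin d) → ℂ) b)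

/-- `F_{A,B}` has finite-dimensional cokernel: finitely many rapidly decreasing pairs
span `𝓢(A) ⊕ 𝓢(B)` together with the image of `F_{A,B}`. -/
def CokerFinDim {d : ℕ} (A B : Set (EuclideanSpace ℝ (Fin d))) : Prop :=
  ∃ (n : ℕ) (v : Fin n → ((A → ℂ) × (B → ℂ))),
    (∀ i, IsRapid (v i).1 ∧ IsRapid (v i).2) ∧
    ∀ αβ : (A → ℂ) × (B → ℂ), IsRapid αβ.1 → IsRapid αβ.2 →
      ∃ (f : SchwartzMap (EuclideanSpace ℝ (Fin d)) ℂ) (c : Fin n → ℂ),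
        αβ = restrMap A B f + ∑ i, c i • v i

lemma isRapid_zero {d : ℕ} {A : Set (EuclideanSpace ℝ (Fin d))} :
    IsRapid (fun _ : A => (0 : ℂ)) := fun N => ⟨0, fun a => by simp⟩

lemma jb_nonneg {d : ℕ} (x : EuclideanSpace ℝ (Fin d)) : 0 ≤ jb x := Real.sqrt_nonneg _

open Classical in
lemma isRapid_delta {d : ℕ} {A : Set (EuclideanSpace ℝ (Fin d))} (a0 : A) :
    IsRapid (fun a : A => if a = a0 then (1 : ℂ) else 0) := by
  intro N
  refine ⟨jb (a0 : EuclideanSpace ℝ (Fin d)) ^ N, fun a => ?_⟩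
  by_cases h : a = a0
  · subst h; simp
  · simp only [h, if_false, norm_zero, zero_mul]
    exact pow_nonneg (jb_nonneg _) _

/-- If `A ⊆ A'`, `B ⊆ B'` are closed discrete sets with `A'∖A`, `B'∖B` infinite and
`F_{A',B'}` has finite-dimensional cokernel, then `Ker F_{A,B}` is infinite-dimensional. -/
theorem kernel_infinite_of_superset_coker_findim (d : ℕ)
    (A B A' B' : Set (EuclideanSpace ℝ (Fin d)))
    (hA : IsClosed A) (hB : IsClosed B) (hA' : IsClosed A') (hB' : IsClosed B')
    (hAd : DiscreteTopology A) (hBd : DiscreteTopology B)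
    (hA'd : DiscreteTopology A') (hB'd : DiscreteTopology B')
    (hAA : A ⊆ A') (hBB : B ⊆ B')
    (hAinf : (A' \ A).Infinite) (hBinf : (B' \ B).Infinite)
    (hcoker : CokerFinDim A' B') :
    ∀ n : ℕ, ∃ f : Fin n → SchwartzMap (EuclideanSpace ℝ (Fin d)) ℂ,
      LinearIndependent ℂ f ∧
      ∀ i, (∀ a ∈ A, f i a = 0) ∧ (∀ b ∈ B, FourierTransform.fourier (⇑(f i) : EuclideanSpace ℝ (Fin d) → ℂ) b = 0) := by
  intro n
  obtain ⟨k, v, hvrap, hv⟩ := hcoker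
  set m := n + k with hm
  haveI : Infinite ↥(A' \ A) := hAinf.to_subtype
  let e : ℕ ↪ ↥(A' \ A) := Infinite.natEmbedding _
  -- the chosen points, as elements of A'
  let a : Fin m → ↥A' := fun j => ⟨(e j).1, (e j).2.1⟩
  have ha_inj : Function.Injective a := by
    intro i j hij
    have h1 : ((a i : ↥A') : EuclideanSpace ℝ (Fin d)) = a j := Subtype.ext_iff.mp hij
    have h1' : ((e (i : ℕ) : ↥(A' \ A)) : EuclideanSpace ℝ (Fin d)) = e (j : ℕ) := h1
    have h2 : e (i : ℕ) = e (j : ℕ) := Subtype.ext h1'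
    exact Fin.val_injective (e.injective h2)
  have ha_notA : ∀ j, ((a j : ↥A') : EuclideanSpace ℝ (Fin d)) ∉ A := fun j => (e j).2.2
  classical
  -- produce delta solutions
  have hdelta : ∀ j : Fin m, ∃ (f : SchwartzMap (EuclideanSpace ℝ (Fin d)) ℂ) (c : Fin k → ℂ),
      ((fun x : ↥A' => if x = a j then (1 : ℂ) else 0, fun _ : ↥B' => (0 : ℂ))
        : (↥A' → ℂ) × (↥B' → ℂ)) = restrMap A' B' f + ∑ i, c i • v i :=
    fun j => hv _ (isRapid_delta (a j)) isRapid_zero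
  choose f c hfc using hdelta
  -- pointwise consequences
  have hf1 : ∀ (j : Fin m) (x : ↥A'),
      f j (x : EuclideanSpace ℝ (Fin d))
        = (if x = a j then 1 else 0) - ∑ i, c j i * (v i).1 x := by
    intro j x
    have h := congrFun (congrArg Prod.fst (hfc j)) x
    simp only [Prod.fst_add, Pi.add_apply, restrMap, Prod.fst_sum, Prod.smul_fst,
      Finset.sum_apply, Pi.smul_apply, smul_eq_mul] at h
    linear_combination -h
  have hf2 : ∀ (j : Fin m) (y : ↥B'),
      FourierTransform.fourier (⇑(f j) : EuclideanSpace ℝ (Fin d) → ℂ) (y : EuclideanSpace ℝ (Fin d))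
        = - ∑ i, c j i * (v i).2 y := by
    intro j y
    have h := congrFun (congrArg Prod.snd (hfc j)) y
    simp only [Prod.snd_add, Pi.add_apply, restrMap, Prod.snd_sum, Prod.smul_snd,
      Finset.sum_apply, Pi.smul_apply, smul_eq_mul] at h
    linear_combination -h
  -- the coefficient linear map
  let L : (Fin m → ℂ) →ₗ[ℂ] (Fin k → ℂ) :=
    { toFun := fun t i => ∑ j, t j * c j i,
      map_add' := by intro t s; funext i; simp [add_mul, Finset.sum_add_distrib]
      map_smul' := by intro r t; funext i; simp [Finset.mul_sum, mul_assoc] }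
  have hker : n ≤ Module.finrank ℂ (LinearMap.ker L) := by
    have h1 := LinearMap.finrank_range_add_finrank_ker L
    have h2 : Module.finrank ℂ (Fin m → ℂ) = m := Module.finrank_fin_fun ℂ
    have h3 : Module.finrank ℂ (LinearMap.range L) ≤ k :=
      (Submodule.finrank_le _).trans_eq (Module.finrank_fin_fun ℂ)
    omega
  -- linearly independent kernel vectors
  let bas := Module.finBasis ℂ (LinearMap.ker L)
  let t : Fin n → (Fin m → ℂ) := fun i => ((bas (Fin.castLE hker i)) : Fin m → ℂ)
  have ht_mem : ∀ i, L (t i) = 0 := fun i => (bas (Fin.castLE hker i)).2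
  have ht_li : LinearIndependent ℂ t := by
    have h1 := (bas.linearIndependent.comp (Fin.castLE hker) (Fin.castLE_injective hker))
    exact h1.map' (LinearMap.ker L).subtype (Submodule.ker_subtype _)
  -- the assembly linear map into Schwartz space
  let F : (Fin m → ℂ) →ₗ[ℂ] SchwartzMap (EuclideanSpace ℝ (Fin d)) ℂ :=
    { toFun := fun s => ∑ j, s j • f j,
      map_add' := by intro s s'; simp [add_smul, Finset.sum_add_distrib]
      map_smul' := by intro r s; simp [smul_smul, Finset.smul_sum] }
  have hFeval : ∀ (s : Fin m → ℂ) (x : EuclideanSpace ℝ (Fin d)),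
      (F s) x = ∑ j, s j * f j x := by
    intro s x
    let ev : SchwartzMap (EuclideanSpace ℝ (Fin d)) ℂ →ₗ[ℂ] ℂ :=
      { toFun := fun g => g x, map_add' := fun _ _ => rfl, map_smul' := fun _ _ => rfl }
    show ev (∑ j, s j • f j) = _
    rw [map_sum]
    simp [ev, smul_eq_mul]
  have hFfour : ∀ (s : Fin m → ℂ) (y : EuclideanSpace ℝ (Fin d)),
      FourierTransform.fourier (⇑(F s) : EuclideanSpace ℝ (Fin d) → ℂ) y = ∑ j, s j * FourierTransform.fourier (⇑(f j) : EuclideanSpace ℝ (Fin d) → ℂ) y := by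
    intro s y
    let ev : SchwartzMap (EuclideanSpace ℝ (Fin d)) ℂ →ₗ[ℂ] ℂ :=
      { toFun := fun g => FourierTransform.fourier (⇑g : EuclideanSpace ℝ (Fin d) → ℂ) y
        map_add' := by
          intro g h
          have : ⇑(SchwartzMap.fourierTransformCLM ℂ (g + h)) y
              = ⇑(SchwartzMap.fourierTransformCLM ℂ g) y
                + ⇑(SchwartzMap.fourierTransformCLM ℂ h) y := by
            rw [map_add]; rfl
          exact this
        map_smul' := by
          intro r g
          have : ⇑(SchwartzMap.fourierTransformCLM ℂ (r • g)) y
              = r • ⇑(SchwartzMap.fourierTransformCLM ℂ g) y := by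
            rw [_root_.map_smul]; rfl
          exact this }
    show ev (∑ j, s j • f j) = _
    rw [map_sum]
    simp [ev, smul_eq_mul]
    rfl
  -- values of F s on A' when s is in the kernel of L
  have hFA' : ∀ (s : Fin m → ℂ), L s = 0 → ∀ x : ↥A',
      (F s) (x : EuclideanSpace ℝ (Fin d)) = ∑ j, s j * (if x = a j then 1 else 0) := by
    intro s hs x
    rw [hFeval]
    have h1 : ∀ j ∈ Finset.univ, s j * f j (x : EuclideanSpace ℝ (Fin d))
        = s j * ((if x = a j then 1 else 0) - ∑ i, c j i * (v i).1 x) :=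
      fun j _ => by rw [hf1]
    rw [Finset.sum_congr rfl h1]
    simp only [mul_sub]
    rw [Finset.sum_sub_distrib]
    have h2 : ∑ j, s j * ∑ i, c j i * (v i).1 x = ∑ i, (L s) i * (v i).1 x := by
      simp_rw [Finset.mul_sum]
      rw [Finset.sum_comm]
      show _ = ∑ i, (∑ j, s j * c j i) * (v i).1 x
      simp [Finset.sum_mul, mul_assoc]
    rw [h2, hs]
    simp
  -- Fourier transform of F s vanishes on B' when s is in the kernel of L
  have hFB' : ∀ (s : Fin m → ℂ), L s = 0 → ∀ y : ↥B',
      FourierTransform.fourier (⇑(F s) : EuclideanSpace ℝ (Fin d) → ℂ) (y : EuclideanSpace ℝ (Fin d)) = 0 := by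
    intro s hs y
    rw [hFfour]
    have h1 : ∀ j ∈ Finset.univ, s j * FourierTransform.fourier (⇑(f j) : EuclideanSpace ℝ (Fin d) → ℂ) (y : EuclideanSpace ℝ (Fin d))
        = -(s j * ∑ i, c j i * (v i).2 y) := fun j _ => by rw [hf2]; ring
    rw [Finset.sum_congr rfl h1, Finset.sum_neg_distrib]
    have h2 : ∑ j, s j * ∑ i, c j i * (v i).2 y = ∑ i, (L s) i * (v i).2 y := by
      simp_rw [Finset.mul_sum]
      rw [Finset.sum_comm]
      show _ = ∑ i, (∑ j, s j * c j i) * (v i).2 y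
      simp [Finset.sum_mul, mul_assoc]
    rw [h2, hs]
    simp
  -- value at the special points recovers the coefficients
  have hFpt : ∀ (s : Fin m → ℂ), L s = 0 → ∀ j : Fin m,
      (F s) ((a j : ↥A') : EuclideanSpace ℝ (Fin d)) = s j := by
    intro s hs j
    rw [hFA' s hs (a j)]
    rw [Finset.sum_eq_single j]
    · simp
    · intro j' _ hj'
      have : a j ≠ a j' := fun h => hj' (ha_inj h).symm
      simp [this]
    · intro h; exact absurd (Finset.mem_univ j) h
  refine ⟨fun i => F (t i), ?_, ?_⟩
  · rw [Fintype.linearIndependent_iff]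
    intro g hg
    have hFs : F (∑ i, g i • t i) = 0 := by
      rw [map_sum]
      simp_rw [_root_.map_smul]
      exact hg
    have hsker : L (∑ i, g i • t i) = 0 := by
      rw [map_sum]
      simp_rw [_root_.map_smul]
      simp [ht_mem]
    have hs0 : (∑ i, g i • t i) = 0 := by
      funext j
      have h := hFpt _ hsker j
      rw [hFs] at h
      simpa using h.symm
    exact Fintype.linearIndependent_iff.mp ht_li g hs0
  · intro i
    constructor
    · intro x hx
      have h := hFA' (t i) (ht_mem i) ⟨x, hAA hx⟩
      rw [h]
      apply Finset.sum_eq_zero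
      intro j _
      have hne : (⟨x, hAA hx⟩ : ↥A') ≠ a j := by
        intro h'
        exact ha_notA j (h' ▸ hx)
      simp [hne]
    · intro y hy
      exact hFB' (t i) (ht_mem i) ⟨y, hBB hy⟩
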